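/- Let α ∈ [0,1) and let n ≥ 8 be an integer. Then the A_α-spectral radius ρ_α(K₂ ∨ (K_{n−6} ∪ 4K₁)) equals the largest real root of ψ(x) = 0, where ψ(x) = x³ − ((α+1)n + 2α − 6)x² + (αn² + (2α²−3α−1)n − 4α − 3)x − 2α²n² + (18α²−14α+8)n − 72α² + 118α − 56. -/

import Mathlib

open Finset

/-- The join `G ∨g H` of two graphs: the disjoint union together with all edges
between the two parts. -/
def SimpleGraph.gjoin {α β : Type*} (G : SimpleGraph α) (H : SimpleGraph β) :
    SimpleGraph (α ⊕ β) where
  Adj u v := match u, v with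
    | Sum.inl u, Sum.inl v => G.Adj u v
    | Sum.inr u, Sum.inr v => H.Adj u v
    | _, _ => True
  symm := ⟨fun u v => match u, v with
    | Sum.inl u, Sum.inl v => G.adj_symm
    | Sum.inr u, Sum.inr v => H.adj_symm
    | Sum.inl _, Sum.inr _ | Sum.inr _, Sum.inl _ => fun _ => trivial⟩
  loopless := ⟨fun u => by cases u <;> simp⟩

infixl:60 " ∨g " => SimpleGraph.gjoin

/-- The `A_α`-matrix `α • D(G) + (1-α) • A(G)` of a graph `G`. -/
noncomputable def aAlphaMatrix {V : Type*} [Fintype V] [DecidableEq V]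
    (α : ℝ) (G : SimpleGraph V) : Matrix V V ℝ := by
  classical
  exact α • Matrix.diagonal (fun v => (G.degree v : ℝ)) + (1 - α) • G.adjMatrix ℝ

/-- The `A_α`-spectral radius `ρ_α(G)`: the largest eigenvalue of `A_α(G)`. -/
noncomputable def rhoAlpha {V : Type*} [Fintype V] [DecidableEq V]
    (α : ℝ) (G : SimpleGraph V) : ℝ :=
  sSup (spectrum ℝ (aAlphaMatrix α G))

/-- The signless Laplacian matrix `Q(G) = D(G) + A(G)`. -/
noncomputable def signlessLaplacian {V : Type*} [Fintype V] [DecidableEq V]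
    (G : SimpleGraph V) : Matrix V V ℝ := by
  classical
  exact Matrix.diagonal (fun v => (G.degree v : ℝ)) + G.adjMatrix ℝ

/-- `q(G)`: the largest eigenvalue of the signless Laplacian matrix of `G`. -/
noncomputable def qIndex {V : Type*} [Fintype V] [DecidableEq V]
    (G : SimpleGraph V) : ℝ :=
  sSup (spectrum ℝ (signlessLaplacian G))

/-- The number of edges (the size) of a graph. -/
noncomputable def edgeCount {V : Type*} [Fintype V] [DecidableEq V]
    (G : SimpleGraph V) : ℕ := by
  classical
  exact G.edgeFinset.card

/-- `i(G - S)`: the number of isolated vertices of the graph obtained from `G`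
by deleting the vertices of `S` together with all edges incident to `S`. -/
noncomputable def isolGminus {V : Type*} [Fintype V] [DecidableEq V]
    (G : SimpleGraph V) (S : Finset V) : ℕ := by
  classical
  exact (Finset.univ.filter (fun v => v ∉ S ∧ ∀ u, G.Adj v u → u ∈ S)).card

/-- `F(n)`: the edge bound from Theorem 1.1. -/
def Fbound (n : ℕ) : ℕ :=
  if n = 6 then 9 else if n = 8 then 18 else (n - 2).choose 2 + 2

/-- `f(α)`: the order bound from Theorem 1.2. -/
noncomputable def fAlpha (α : ℝ) : ℝ :=
  if α ≤ 1 / 2 then 20 else if α ≤ 5 / 7 then 25 else 7 / (1 - α) + 3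

/-- The graph `K₂ ∨ (K_{n-6} ∪ 4K₁)`. -/
def G3 (n : ℕ) : SimpleGraph (Fin 2 ⊕ (Fin (n - 6) ⊕ Fin 4)) :=
  (⊤ : SimpleGraph (Fin 2)) ∨g ((⊤ : SimpleGraph (Fin (n - 6))) ⊕g (⊥ : SimpleGraph (Fin 4)))


namespace AuxRho
open Finset Matrix

noncomputable def psiF (a N x : ℝ) : ℝ :=
  x^3 - ((a+1)*N + 2*a - 6)*x^2 + (a*N^2 + (2*a^2-3*a-1)*N - 4*a - 3)*x
    - 2*a^2*N^2 + (18*a^2-14*a+8)*N - 72*a^2 + 118*a - 56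

lemma cubic_pos (a b c x : ℝ) (h : 1 + |a| + |b| + |c| ≤ x) :
    0 < x^3 + a*x^2 + b*x + c := by
  have ha := abs_nonneg a
  have hb := abs_nonneg b
  have hc := abs_nonneg c
  have hx1 : (1:ℝ) ≤ x := by linarith
  have hxx : x ≤ x^2 := by nlinarith
  have h3 : x^2 * (1 + |a| + |b| + |c|) ≤ x^2 * x :=
    mul_le_mul_of_nonneg_left h (sq_nonneg x)
  have hax : -(|a| * x^2) ≤ a * x^2 := by
    have := neg_abs_le a
    nlinarith [sq_nonneg x]
  have hbx : -(|b| * x^2) ≤ b * x := by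
    have h1 := neg_abs_le b
    have h2 : |b| * x ≤ |b| * x^2 := mul_le_mul_of_nonneg_left hxx hb
    nlinarith
  have hcx : -(|c| * x^2) ≤ c := by
    have h1 := neg_abs_le c
    have h2 : |c| * 1 ≤ |c| * x^2 := by nlinarith
    nlinarith
  nlinarith [sq_nonneg x]

lemma psiF_pos (a N x : ℝ)
    (h : 1 + |(-((a+1)*N + 2*a - 6))| + |(a*N^2 + (2*a^2-3*a-1)*N - 4*a - 3)|
        + |(- 2*a^2*N^2 + (18*a^2-14*a+8)*N - 72*a^2 + 118*a - 56)| ≤ x) :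
    0 < psiF a N x := by
  have := cubic_pos (-((a+1)*N + 2*a - 6)) (a*N^2 + (2*a^2-3*a-1)*N - 4*a - 3)
    (- 2*a^2*N^2 + (18*a^2-14*a+8)*N - 72*a^2 + 118*a - 56) x h
  unfold psiF
  nlinarith [this]

lemma psi_t_case1 (a M : ℝ) (ha0 : 0 ≤ a) (ha1 : a < 1) (hM : 2 ≤ M)
    (hreg : M ≤ a * (M + 4)) :
    psiF a (M + 6) (a * (M + 6) + 1 - 2*a) ≤ 0 := by
  have key : psiF a (M + 6) (a * (M + 6) + 1 - 2*a)
      = (1-a)^2 * (-2*a*(M+4)*(M+2) + 6*M - 16) := by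
    unfold psiF; ring
  rw [key]
  have h1 : -2*a*(M+4)*(M+2) ≤ -2*M*(M+2) := by nlinarith
  have h2 : -2*M*(M+2) + 6*M - 16 < 0 := by nlinarith
  nlinarith [sq_nonneg (1-a)]

lemma psi_t_case2 (a M : ℝ) (ha0 : 0 ≤ a) (ha1 : a < 1) (hM : 2 ≤ M) :
    psiF a (M + 6) (M + 1) ≤ 0 := by
  have key : psiF a (M + 6) (M + 1) = 8*(a-1)*(a*(M-3)+2) := by
    unfold psiF; ring
  rw [key]
  have h1 : 0 ≤ a*(M-3)+2 := by nlinarith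
  nlinarith

noncomputable def Cmat (a M x : ℝ) : Matrix (Fin 3) (Fin 3) ℝ :=
  !![x - (a*(M+5)+(1-a)), (a-1)*M, 4*a-4;
     2*a-2, x - (a*(M+1)+(1-a)*(M-1)), 0;
     2*a-2, 0, x - 2*a]

lemma det_Cmat (a M x : ℝ) : (Cmat a M x).det = psiF a (M+6) x := by
  have h := Matrix.det_fin_three (Cmat a M x)
  have e00 : Cmat a M x 0 0 = x - (a*(M+5)+(1-a)) := rfl
  have e01 : Cmat a M x 0 1 = (a-1)*M := rfl
  have e02 : Cmat a M x 0 2 = 4*a-4 := rfl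
  have e10 : Cmat a M x 1 0 = 2*a-2 := rfl
  have e11 : Cmat a M x 1 1 = x - (a*(M+1)+(1-a)*(M-1)) := rfl
  have e12 : Cmat a M x 1 2 = 0 := rfl
  have e20 : Cmat a M x 2 0 = 2*a-2 := rfl
  have e21 : Cmat a M x 2 1 = 0 := rfl
  have e22 : Cmat a M x 2 2 = x - 2*a := rfl
  rw [e00, e01, e02, e10, e11, e12, e20, e21, e22] at h
  rw [h]; unfold psiF; ring

lemma Cmat_mulVec (a M x : ℝ) (w : Fin 3 → ℝ) :
    (Cmat a M x) *ᵥ w = ![(x - (a*(M+5)+(1-a))) * w 0 + ((a-1)*M) * w 1 + (4*a-4) * w 2,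
      (2*a-2) * w 0 + (x - (a*(M+1)+(1-a)*(M-1))) * w 1,
      (2*a-2) * w 0 + (x - 2*a) * w 2] := by
  funext i
  fin_cases i <;>
    simp [Cmat, Matrix.mulVec, dotProduct, Fin.sum_univ_three]

noncomputable def XB (a N : ℝ) : ℝ :=
  1 + |(-((a+1)*N + 2*a - 6))| + |(a*N^2 + (2*a^2-3*a-1)*N - 4*a - 3)|
    + |(- 2*a^2*N^2 + (18*a^2-14*a+8)*N - 72*a^2 + 118*a - 56)|

lemma psiF_pos' (a N x : ℝ) (h : XB a N ≤ x) : 0 < psiF a N x := psiF_pos a N x h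

lemma psiF_continuous (a N : ℝ) : Continuous (psiF a N) := by
  unfold psiF; fun_prop

lemma exists_root_ge (a N t : ℝ) (ht : psiF a N t ≤ 0) :
    ∃ z, psiF a N z = 0 ∧ t ≤ z := by
  have hX : 0 < psiF a N (max t (XB a N)) := psiF_pos' _ _ _ (le_max_right _ _)
  have hsub := intermediate_value_Icc (le_max_left t (XB a N))
    (psiF_continuous a N).continuousOn
  have h0 : (0:ℝ) ∈ Set.Icc (psiF a N t) (psiF a N (max t (XB a N))) := ⟨ht, hX.le⟩
  obtain ⟨z, hz, hz0⟩ := hsub h0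
  exact ⟨z, hz0, hz.1⟩

lemma bddAbove_roots (a N : ℝ) : BddAbove {x : ℝ | psiF a N x = 0} := by
  refine ⟨XB a N, fun z hz => ?_⟩
  by_contra h
  push_neg at h
  exact absurd hz (ne_of_gt (psiF_pos' a N z h.le))

lemma isGreatest_roots (a N t : ℝ) (ht : psiF a N t ≤ 0) :
    IsGreatest {x : ℝ | psiF a N x = 0} (sSup {x : ℝ | psiF a N x = 0}) := by
  have hne : {x : ℝ | psiF a N x = 0}.Nonempty := by
    obtain ⟨z, hz, _⟩ := exists_root_ge a N t ht
    exact ⟨z, hz⟩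
  have hcl : IsClosed {x : ℝ | psiF a N x = 0} :=
    isClosed_eq (psiF_continuous a N) continuous_const
  exact ⟨hcl.csSup_mem hne (bddAbove_roots a N),
    fun z hz => le_csSup (bddAbove_roots a N) hz⟩

abbrev Vm (m : ℕ) := Fin 2 ⊕ (Fin m ⊕ Fin 4)
abbrev Gm (m : ℕ) : SimpleGraph (Vm m) :=
  (⊤ : SimpleGraph (Fin 2)) ∨g ((⊤ : SimpleGraph (Fin m)) ⊕g (⊥ : SimpleGraph (Fin 4)))

variable {m : ℕ}
open scoped Classical

lemma adj_ll (i j : Fin 2) : (Gm m).Adj (.inl i) (.inl j) ↔ i ≠ j := by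
  simp [Gm, SimpleGraph.gjoin]
lemma adj_lr (i : Fin 2) (x : Fin m ⊕ Fin 4) : (Gm m).Adj (.inl i) (.inr x) := by
  simp [Gm, SimpleGraph.gjoin]
lemma adj_rl (i : Fin 2) (x : Fin m ⊕ Fin 4) : (Gm m).Adj (.inr x) (.inl i) := by
  simp [Gm, SimpleGraph.gjoin]
lemma adj_r11 (j j' : Fin m) : (Gm m).Adj (.inr (.inl j)) (.inr (.inl j')) ↔ j ≠ j' := by
  simp [Gm, SimpleGraph.gjoin]
lemma adj_r12 (j : Fin m) (k : Fin 4) : ¬ (Gm m).Adj (.inr (.inl j)) (.inr (.inr k)) := by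
  simp [Gm, SimpleGraph.gjoin]
lemma adj_r21 (j : Fin m) (k : Fin 4) : ¬ (Gm m).Adj (.inr (.inr k)) (.inr (.inl j)) := by
  simp [Gm, SimpleGraph.gjoin]
lemma adj_r22 (k k' : Fin 4) : ¬ (Gm m).Adj (.inr (.inr k)) (.inr (.inr k')) := by
  simp [Gm, SimpleGraph.gjoin]

lemma sum_ite_ne {k : ℕ} (i : Fin k) (g : Fin k → ℝ) :
    ∑ j, (if i ≠ j then g j else 0) = (∑ j, g j) - g i := by
  have h : ∀ j : Fin k, (if i ≠ j then g j else 0) = g j - (if j = i then g j else 0) := by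
    intro j; by_cases h : j = i
    · subst h; simp
    · rw [if_pos (fun hh => h hh.symm), if_neg h]; ring
  rw [Finset.sum_congr rfl fun j _ => h j, Finset.sum_sub_distrib,
    Finset.sum_ite_eq' Finset.univ i g]
  simp

lemma rowSum_inl (i : Fin 2) (f : Vm m → ℝ) :
    ∑ j, (if (Gm m).Adj (.inl i) j then f j else 0)
      = ((∑ t : Fin 2, f (.inl t)) - f (.inl i)) + (∑ t : Fin m, f (.inr (.inl t)))
        + (∑ t : Fin 4, f (.inr (.inr t))) := by
  rw [Fintype.sum_sum_type]
  simp only [adj_lr, if_true]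
  rw [Fintype.sum_sum_type]
  simp only [adj_ll]
  rw [sum_ite_ne i (fun t => f (.inl t))]
  ring

lemma rowSum_inr1 (j : Fin m) (f : Vm m → ℝ) :
    ∑ x, (if (Gm m).Adj (.inr (.inl j)) x then f x else 0)
      = (∑ t : Fin 2, f (.inl t)) + ((∑ t : Fin m, f (.inr (.inl t))) - f (.inr (.inl j))) := by
  rw [Fintype.sum_sum_type]
  simp only [adj_rl, if_true]
  rw [Fintype.sum_sum_type]
  simp only [adj_r11, adj_r12, if_false]
  rw [sum_ite_ne j (fun t => f (.inr (.inl t)))]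
  simp

lemma rowSum_inr2 (k : Fin 4) (f : Vm m → ℝ) :
    ∑ x, (if (Gm m).Adj (.inr (.inr k)) x then f x else 0)
      = ∑ t : Fin 2, f (.inl t) := by
  rw [Fintype.sum_sum_type]
  simp only [adj_rl, if_true]
  rw [Fintype.sum_sum_type]
  simp only [adj_r21, adj_r22, if_false]
  simp

lemma degree_real {V : Type*} [Fintype V] [DecidableEq V] (G : SimpleGraph V) (u : V) :
    ((G.degree u : ℝ)) = ∑ j, (if G.Adj u j then (1:ℝ) else 0) := by
  rw [Finset.sum_boole, SimpleGraph.degree, SimpleGraph.neighborFinset_eq_filter]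

lemma deg_inl (i : Fin 2) : (((Gm m).degree (.inl i) : ℝ)) = (m : ℝ) + 5 := by
  rw [degree_real, rowSum_inl]
  simp [Finset.sum_const, Finset.card_univ]
  try ring

lemma deg_inr1 (j : Fin m) : (((Gm m).degree (.inr (.inl j)) : ℝ)) = (m : ℝ) + 1 := by
  rw [degree_real, rowSum_inr1]
  simp [Finset.sum_const, Finset.card_univ]
  try ring

lemma deg_inr2 (k : Fin 4) : (((Gm m).degree (.inr (.inr k)) : ℝ)) = 2 := by
  rw [degree_real, rowSum_inr2]
  simp [Finset.sum_const, Finset.card_univ]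

lemma mulVec_aAlpha {V : Type*} [Fintype V] [DecidableEq V] (α : ℝ) (G : SimpleGraph V)
    (v : V → ℝ) (u : V) :
    (aAlphaMatrix α G *ᵥ v) u
      = α * ((G.degree u : ℝ)) * v u + (1 - α) * ∑ j, (if G.Adj u j then v j else 0) := by
  simp only [aAlphaMatrix, Matrix.add_mulVec, Matrix.smul_mulVec, Pi.add_apply,
    Pi.smul_apply, Matrix.mulVec_diagonal, smul_eq_mul]
  rw [Matrix.mulVec, dotProduct]
  simp only [SimpleGraph.adjMatrix_apply, ite_mul, one_mul, zero_mul]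
  ring

lemma mem_spectrum_iff_exists {V : Type*} [Fintype V] [DecidableEq V]
    (M : Matrix V V ℝ) (x : ℝ) :
    x ∈ spectrum ℝ M ↔ ∃ v : V → ℝ, v ≠ 0 ∧ M *ᵥ v = x • v := by
  rw [spectrum.mem_iff, Matrix.isUnit_iff_isUnit_det, isUnit_iff_ne_zero, not_not,
    ← Matrix.exists_mulVec_eq_zero_iff]
  constructor
  · rintro ⟨v, hv, h⟩
    refine ⟨v, hv, ?_⟩
    rw [Algebra.algebraMap_eq_smul_one, Matrix.sub_mulVec, Matrix.smul_mulVec,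
      Matrix.one_mulVec, sub_eq_zero] at h
    exact h.symm
  · rintro ⟨v, hv, h⟩
    refine ⟨v, hv, ?_⟩
    rw [Algebra.algebraMap_eq_smul_one, Matrix.sub_mulVec, Matrix.smul_mulVec,
      Matrix.one_mulVec, h, sub_self]

lemma root_mem_spectrum (α : ℝ) (m : ℕ) (hm : 2 ≤ m) (x : ℝ)
    (hx : psiF α ((m:ℝ)+6) x = 0) :
    x ∈ spectrum ℝ (aAlphaMatrix α (Gm m)) := by
  have hdet : (Cmat α (m:ℝ) x).det = 0 := by rw [det_Cmat]; exact hx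
  obtain ⟨w, hw0, hw⟩ := (Matrix.exists_mulVec_eq_zero_iff).2 hdet
  rw [Cmat_mulVec] at hw
  have E0 := congrFun hw 0
  have E1 := congrFun hw 1
  have E2 := congrFun hw 2
  simp only [Matrix.cons_val_zero, Matrix.cons_val_one, Matrix.head_cons,
    Matrix.cons_val_two, Matrix.tail_cons, Pi.zero_apply] at E0 E1 E2
  set v : Vm m → ℝ := Sum.elim (fun _ => w 0) (Sum.elim (fun _ => w 1) (fun _ => w 2)) with hv
  rw [mem_spectrum_iff_exists]
  refine ⟨v, ?_, ?_⟩
  · intro h0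
    apply hw0
    funext i
    fin_cases i
    · exact congrFun h0 (Sum.inl 0)
    · exact congrFun h0 (Sum.inr (Sum.inl ⟨0, by omega⟩))
    · exact congrFun h0 (Sum.inr (Sum.inr 0))
  · have hs1 : (∑ t : Fin 2, v (Sum.inl t)) = 2 * w 0 := by
      simp [hv]; try ring
    have hs2 : (∑ t : Fin m, v (Sum.inr (Sum.inl t))) = (m:ℝ) * w 1 := by
      simp [hv, Finset.sum_const, Finset.card_univ]
    have hs3 : (∑ t : Fin 4, v (Sum.inr (Sum.inr t))) = 4 * w 2 := by
      simp [hv]; try ring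
    funext u
    rw [Pi.smul_apply, smul_eq_mul]
    cases u with
    | inl i =>
      rw [mulVec_aAlpha, rowSum_inl, deg_inl, hs1, hs2, hs3]
      have hvi : v (Sum.inl i) = w 0 := rfl
      rw [hvi]
      linear_combination (-1 : ℝ) * E0
    | inr z =>
      cases z with
      | inl j =>
        rw [mulVec_aAlpha, rowSum_inr1, deg_inr1, hs1, hs2]
        have hvi : v (Sum.inr (Sum.inl j)) = w 1 := rfl
        rw [hvi]
        linear_combination (-1 : ℝ) * E1
      | inr k =>
        rw [mulVec_aAlpha, rowSum_inr2, deg_inr2, hs1]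
        have hvi : v (Sum.inr (Sum.inr k)) = w 2 := rfl
        rw [hvi]
        linear_combination (-1 : ℝ) * E2

lemma spectrum_cases (α : ℝ) (m : ℕ) (hm : 2 ≤ m) (x : ℝ)
    (hx : x ∈ spectrum ℝ (aAlphaMatrix α (Gm m))) :
    psiF α ((m:ℝ)+6) x = 0 ∨ x = α*((m:ℝ)+5) - (1-α) ∨ x = α*((m:ℝ)+1) - (1-α) ∨ x = 2*α := by
  obtain ⟨v, hv0, hveq⟩ := (mem_spectrum_iff_exists _ x).1 hx
  by_cases h1 : x = α*((m:ℝ)+5) - (1-α)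
  · exact Or.inr (Or.inl h1)
  by_cases h2 : x = α*((m:ℝ)+1) - (1-α)
  · exact Or.inr (Or.inr (Or.inl h2))
  by_cases h3 : x = 2*α
  · exact Or.inr (Or.inr (Or.inr h3))
  left
  have hEq : ∀ u, (aAlphaMatrix α (Gm m) *ᵥ v) u = x * v u := by
    intro u
    rw [hveq, Pi.smul_apply, smul_eq_mul]
  have hc1 : ∀ i i' : Fin 2, v (Sum.inl i) = v (Sum.inl i') := by
    intro i i'
    have e := hEq (Sum.inl i)
    have e' := hEq (Sum.inl i')
    rw [mulVec_aAlpha, rowSum_inl, deg_inl] at e e'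
    have hfac : (α*((m:ℝ)+5) - (1-α) - x) * (v (Sum.inl i) - v (Sum.inl i')) = 0 := by
      linear_combination e - e'
    rcases mul_eq_zero.1 hfac with h | h
    · exact absurd (by linarith) h1
    · linarith
  have hc2 : ∀ j j' : Fin m, v (Sum.inr (Sum.inl j)) = v (Sum.inr (Sum.inl j')) := by
    intro j j'
    have e := hEq (Sum.inr (Sum.inl j))
    have e' := hEq (Sum.inr (Sum.inl j'))
    rw [mulVec_aAlpha, rowSum_inr1, deg_inr1] at e e'
    have hfac : (α*((m:ℝ)+1) - (1-α) - x)
        * (v (Sum.inr (Sum.inl j)) - v (Sum.inr (Sum.inl j'))) = 0 := by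
      linear_combination e - e'
    rcases mul_eq_zero.1 hfac with h | h
    · exact absurd (by linarith) h2
    · linarith
  have hc3 : ∀ k k' : Fin 4, v (Sum.inr (Sum.inr k)) = v (Sum.inr (Sum.inr k')) := by
    intro k k'
    have e := hEq (Sum.inr (Sum.inr k))
    have e' := hEq (Sum.inr (Sum.inr k'))
    rw [mulVec_aAlpha, rowSum_inr2, deg_inr2] at e e'
    have hfac : (2*α - x) * (v (Sum.inr (Sum.inr k)) - v (Sum.inr (Sum.inr k'))) = 0 := by
      linear_combination e - e'
    rcases mul_eq_zero.1 hfac with h | h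
    · exact absurd (by linarith) h3
    · linarith
  set j0 : Fin m := ⟨0, by omega⟩ with hj0
  set a := v (Sum.inl 0) with hadef
  set b := v (Sum.inr (Sum.inl j0)) with hbdef
  set c := v (Sum.inr (Sum.inr 0)) with hcdef
  have hva : ∀ i : Fin 2, v (Sum.inl i) = a := fun i => hc1 i 0
  have hvb : ∀ j : Fin m, v (Sum.inr (Sum.inl j)) = b := fun j => hc2 j j0
  have hvc : ∀ k : Fin 4, v (Sum.inr (Sum.inr k)) = c := fun k => hc3 k 0
  have hs1 : (∑ t : Fin 2, v (Sum.inl t)) = 2 * a := by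
    rw [Finset.sum_congr rfl fun t _ => hva t]
    simp
    try ring
  have hs2 : (∑ t : Fin m, v (Sum.inr (Sum.inl t))) = (m:ℝ) * b := by
    rw [Finset.sum_congr rfl fun t _ => hvb t]
    simp [Finset.sum_const, Finset.card_univ]
  have hs3 : (∑ t : Fin 4, v (Sum.inr (Sum.inr t))) = 4 * c := by
    rw [Finset.sum_congr rfl fun t _ => hvc t]
    simp
    try ring
  have Ea := hEq (Sum.inl 0)
  rw [mulVec_aAlpha, rowSum_inl, deg_inl, hs1, hs2, hs3, ← hadef] at Ea
  have Eb := hEq (Sum.inr (Sum.inl j0))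
  rw [mulVec_aAlpha, rowSum_inr1, deg_inr1, hs1, hs2, ← hbdef] at Eb
  have Ec := hEq (Sum.inr (Sum.inr 0))
  rw [mulVec_aAlpha, rowSum_inr2, deg_inr2, hs1, ← hcdef] at Ec
  have hwne : ![a, b, c] ≠ 0 := by
    intro h0
    apply hv0
    funext u
    have ha0 : a = 0 := congrFun h0 0
    have hb0 : b = 0 := congrFun h0 1
    have hc0 : c = 0 := congrFun h0 2
    cases u with
    | inl i => rw [hva i, ha0]; rfl
    | inr z =>
      cases z with
      | inl j => rw [hvb j, hb0]; rfl
      | inr k => rw [hvc k, hc0]; rfl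
  have hh0 : (x - (α*((m:ℝ)+5)+(1-α))) * a + ((α-1)*(m:ℝ)) * b + (4*α-4) * c = 0 := by
    linear_combination -Ea
  have hh1 : (2*α-2) * a + (x - (α*((m:ℝ)+1)+(1-α)*((m:ℝ)-1))) * b = 0 := by
    linear_combination -Eb
  have hh2 : (2*α-2) * a + (x - 2*α) * c = 0 := by
    linear_combination -Ec
  have hCw : Cmat α (m:ℝ) x *ᵥ ![a, b, c] = 0 := by
    rw [Cmat_mulVec]
    funext i
    fin_cases i
    · exact hh0
    · exact hh1
    · exact hh2
  have hdet : (Cmat α (m:ℝ) x).det = 0 :=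
    (Matrix.exists_mulVec_eq_zero_iff).1 ⟨![a, b, c], hwne, hCw⟩
  rw [det_Cmat] at hdet
  exact hdet

end AuxRho

theorem rhoAlpha_G3_largest_root (α : ℝ) (hα0 : 0 ≤ α) (hα1 : α < 1)
    (n : ℕ) (hn : 8 ≤ n) :
    IsGreatest {x : ℝ | x ^ 3 - ((α + 1) * (n : ℝ) + 2 * α - 6) * x ^ 2
        + (α * (n : ℝ) ^ 2 + (2 * α ^ 2 - 3 * α - 1) * (n : ℝ) - 4 * α - 3) * x
        - 2 * α ^ 2 * (n : ℝ) ^ 2 + (18 * α ^ 2 - 14 * α + 8) * (n : ℝ)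
        - 72 * α ^ 2 + 118 * α - 56 = 0} (rhoAlpha α (G3 n)) := by
  classical
  have hm : 2 ≤ n - 6 := by omega
  have hcast : ((n - 6 : ℕ) : ℝ) + 6 = (n : ℝ) := by
    have h6 : (6:ℕ) ≤ n := by omega
    push_cast [Nat.cast_sub h6]
    ring
  set Mr : ℝ := ((n - 6 : ℕ) : ℝ) with hMr
  have hM2 : (2:ℝ) ≤ Mr := by
    rw [hMr]; exact_mod_cast hm
  -- rewrite the target set in terms of psiF
  have hpsieq : ∀ y : ℝ, AuxRho.psiF α (Mr + 6) y
      = y ^ 3 - ((α + 1) * (n : ℝ) + 2 * α - 6) * y ^ 2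
        + (α * (n : ℝ) ^ 2 + (2 * α ^ 2 - 3 * α - 1) * (n : ℝ) - 4 * α - 3) * y
        - 2 * α ^ 2 * (n : ℝ) ^ 2 + (18 * α ^ 2 - 14 * α + 8) * (n : ℝ)
        - 72 * α ^ 2 + 118 * α - 56 := by
    intro y
    rw [AuxRho.psiF, hMr, hcast]
  have hsets : {x : ℝ | x ^ 3 - ((α + 1) * (n : ℝ) + 2 * α - 6) * x ^ 2
        + (α * (n : ℝ) ^ 2 + (2 * α ^ 2 - 3 * α - 1) * (n : ℝ) - 4 * α - 3) * x
        - 2 * α ^ 2 * (n : ℝ) ^ 2 + (18 * α ^ 2 - 14 * α + 8) * (n : ℝ)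
        - 72 * α ^ 2 + 118 * α - 56 = 0}
      = {x : ℝ | AuxRho.psiF α (Mr + 6) x = 0} := by
    ext y
    simp only [Set.mem_setOf_eq, hpsieq y]
  rw [hsets]
  -- the candidate point t₀ with ψ(t₀) ≤ 0 dominating the exceptional eigenvalues
  set t₀ : ℝ := if Mr ≤ α * (Mr + 4) then α * (Mr + 6) + 1 - 2*α else Mr + 1 with ht₀
  have hψt : AuxRho.psiF α (Mr + 6) t₀ ≤ 0 := by
    rw [ht₀]
    split_ifs with hreg
    · exact AuxRho.psi_t_case1 α Mr hα0 hα1 hM2 hreg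
    · exact AuxRho.psi_t_case2 α Mr hα0 hα1 hM2
  have hαM : 0 ≤ α * Mr := mul_nonneg hα0 (by linarith)
  have hL1 : α * (Mr + 5) - (1 - α) ≤ t₀ := by
    rw [ht₀]; split_ifs with hreg
    · nlinarith
    · nlinarith
  have hL2 : α * (Mr + 1) - (1 - α) ≤ t₀ := by
    rw [ht₀]; split_ifs with hreg
    · nlinarith
    · nlinarith
  have hL3 : 2 * α ≤ t₀ := by
    rw [ht₀]; split_ifs with hreg
    · nlinarith
    · nlinarith
  -- the greatest root
  have hgr := AuxRho.isGreatest_roots α (Mr + 6) t₀ hψt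
  set r : ℝ := sSup {x : ℝ | AuxRho.psiF α (Mr + 6) x = 0} with hr
  have ht0r : t₀ ≤ r := by
    obtain ⟨z, hz, htz⟩ := AuxRho.exists_root_ge α (Mr + 6) t₀ hψt
    exact le_trans htz (hgr.2 hz)
  -- spectrum facts
  have hrs : r ∈ spectrum ℝ (aAlphaMatrix α (AuxRho.Gm (n - 6))) :=
    AuxRho.root_mem_spectrum α (n - 6) hm r hgr.1
  have hupper : ∀ x ∈ spectrum ℝ (aAlphaMatrix α (AuxRho.Gm (n - 6))), x ≤ r := by
    intro x hx
    rcases AuxRho.spectrum_cases α (n - 6) hm x hx with h | h | h | h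
    · exact hgr.2 h
    · rw [h]; exact le_trans hL1 ht0r
    · rw [h]; exact le_trans hL2 ht0r
    · rw [h]; exact le_trans hL3 ht0r
  have hrho : rhoAlpha α (G3 n) = r := by
    have heq : rhoAlpha α (G3 n)
        = sSup (spectrum ℝ (aAlphaMatrix α (AuxRho.Gm (n - 6)))) := rfl
    rw [heq]
    exact le_antisymm (csSup_le ⟨r, hrs⟩ hupper) (le_csSup ⟨r, hupper⟩ hrs)
  rw [hrho]
  exact hgr
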